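/- arXiv:1201.2577 — 3 statements merged into one kernel-verified Lean document; each statement's English description precedes it below -/
import Mathlib

section
/- Let S be a p×p symmetric matrix of rank r with support L (the span of its eigenvectors with nonzero eigenvalue), let P_L denote orthogonal projection onto L, and define 𝒫_L(A) = A − P_L^⊥ A P_L^⊥. Then for any p×p symmetric matrices Δ and M: |⟨Δ, 𝒫_L(M)⟩| ≤ √(2r) · ‖Δ‖_∞ · ‖M‖₂. -/
open Matrix

/-- Operator (spectral) norm of a real square matrix, via its action on Euclidean space. -/
noncomputable def opN {p : ℕ} (A : Matrix (Fin p) (Fin p) ℝ) : ℝ :=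
  ‖Matrix.toEuclideanCLM (𝕜 := ℝ) A‖

/-- Frobenius norm. -/
noncomputable def frobN {p : ℕ} (M : Matrix (Fin p) (Fin p) ℝ) : ℝ :=
  Real.sqrt ((Mᵀ * M).trace)

/-- Trace inner product. -/
def mInner {p : ℕ} (M N : Matrix (Fin p) (Fin p) ℝ) : ℝ := (Mᵀ * N).trace

/-- The matrix of the orthogonal projection onto a subspace of Euclidean space. -/
noncomputable def projMatrix {p : ℕ} (L : Submodule ℝ (EuclideanSpace ℝ (Fin p))) :
    Matrix (Fin p) (Fin p) ℝ :=
  Matrix.toEuclideanLin.symm (L.subtype ∘ₗ (Submodule.orthogonalProjection L).toLinearMap)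

/-- The support of a symmetric matrix: the range of the associated linear map. -/
noncomputable def suppOf {p : ℕ} (S : Matrix (Fin p) (Fin p) ℝ) :
    Submodule ℝ (EuclideanSpace ℝ (Fin p)) := LinearMap.range (Matrix.toEuclideanLin S)

section Aux

variable {p : ℕ}

lemma mInner_eq_sum (X Y : Matrix (Fin p) (Fin p) ℝ) :
    mInner X Y = ∑ j, ∑ i, X i j * Y i j := by
  simp [mInner, Matrix.trace, Matrix.diag, Matrix.mul_apply, Matrix.transpose_apply]

lemma mInner_self_nonneg (X : Matrix (Fin p) (Fin p) ℝ) : 0 ≤ mInner X X := by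
  rw [mInner_eq_sum]
  exact Finset.sum_nonneg fun j _ => Finset.sum_nonneg fun i _ => mul_self_nonneg _

lemma mInner_comm (X Y : Matrix (Fin p) (Fin p) ℝ) : mInner X Y = mInner Y X := by
  simp only [mInner_eq_sum, mul_comm]

lemma mInner_transpose (X : Matrix (Fin p) (Fin p) ℝ) : mInner Xᵀ Xᵀ = mInner X X := by
  simp only [mInner_eq_sum, Matrix.transpose_apply]
  exact Finset.sum_comm

lemma mulVec_sq_sum_le (A : Matrix (Fin p) (Fin p) ℝ) (v : Fin p → ℝ) :
    ∑ i, (A.mulVec v i)^2 ≤ (opN A)^2 * ∑ i, (v i)^2 := by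
  set x : EuclideanSpace ℝ (Fin p) := (WithLp.equiv 2 (Fin p → ℝ)).symm v with hx
  have h := (Matrix.toEuclideanCLM (𝕜 := ℝ) A).le_opNorm x
  have hax : Matrix.toEuclideanCLM (𝕜 := ℝ) A x
      = (WithLp.equiv 2 (Fin p → ℝ)).symm (A.mulVec v) := by
    rw [hx]; rfl
  have hnx : ‖x‖ = Real.sqrt (∑ i, (v i)^2) := by
    rw [EuclideanSpace.norm_eq]
    congr 1
    exact Finset.sum_congr rfl fun i _ => by
      simp [hx, WithLp.equiv_symm_apply, Real.norm_eq_abs, sq_abs]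
  have hnax : ‖Matrix.toEuclideanCLM (𝕜 := ℝ) A x‖ = Real.sqrt (∑ i, (A.mulVec v i)^2) := by
    rw [hax, EuclideanSpace.norm_eq]
    congr 1
    exact Finset.sum_congr rfl fun i _ => by
      simp [WithLp.equiv_symm_apply, Real.norm_eq_abs, sq_abs]
  rw [hnax, hnx] at h
  have h1 : (0:ℝ) ≤ ∑ i, (A.mulVec v i)^2 :=
    Finset.sum_nonneg fun i _ => sq_nonneg _
  have h2 : (0:ℝ) ≤ ∑ i, (v i)^2 := Finset.sum_nonneg fun i _ => sq_nonneg _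
  calc ∑ i, (A.mulVec v i)^2 = (Real.sqrt (∑ i, (A.mulVec v i)^2))^2 :=
        (Real.sq_sqrt h1).symm
    _ ≤ (opN A * Real.sqrt (∑ i, (v i)^2))^2 := by
        apply pow_le_pow_left₀ (Real.sqrt_nonneg _) h
    _ = (opN A)^2 * ∑ i, (v i)^2 := by
        rw [mul_pow, Real.sq_sqrt h2]

lemma mInner_mul_le (A X : Matrix (Fin p) (Fin p) ℝ) :
    mInner (A * X) (A * X) ≤ (opN A)^2 * mInner X X := by
  rw [mInner_eq_sum, mInner_eq_sum, Finset.mul_sum]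
  apply Finset.sum_le_sum
  intro j _
  have h := mulVec_sq_sum_le A (fun i => X i j)
  have e : ∀ i, (A * X) i j = A.mulVec (fun k => X k j) i := by
    intro i; simp [Matrix.mul_apply, Matrix.mulVec, dotProduct]
  calc ∑ i, (A * X) i j * (A * X) i j
      = ∑ i, (A.mulVec (fun k => X k j) i)^2 := by
        exact Finset.sum_congr rfl fun i _ => by rw [e i, sq]
    _ ≤ (opN A)^2 * ∑ i, (X i j)^2 := h
    _ = (opN A)^2 * ∑ i, X i j * X i j := by
        congr 1; exact Finset.sum_congr rfl fun i _ => (sq (X i j)).symm ▸ (sq (X i j))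

lemma abs_mInner_le (X Y : Matrix (Fin p) (Fin p) ℝ) :
    |mInner X Y| ≤ Real.sqrt (mInner X X) * Real.sqrt (mInner Y Y) := by
  have key : (mInner X Y)^2 ≤ (mInner X X) * (mInner Y Y) := by
    have e : ∀ Z W : Matrix (Fin p) (Fin p) ℝ,
        mInner Z W = ∑ ij : Fin p × Fin p, Z ij.2 ij.1 * W ij.2 ij.1 := by
      intro Z W; rw [mInner_eq_sum, Fintype.sum_prod_type]
    rw [e X Y, e X X, e Y Y]
    have := Finset.sum_mul_sq_le_sq_mul_sq Finset.univ
      (fun ij : Fin p × Fin p => X ij.2 ij.1) (fun ij : Fin p × Fin p => Y ij.2 ij.1)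
    simpa [sq] using this
  have h1 := mInner_self_nonneg X
  have h2 := mInner_self_nonneg Y
  calc |mInner X Y| = Real.sqrt ((mInner X Y)^2) := (Real.sqrt_sq_eq_abs _).symm
    _ ≤ Real.sqrt ((mInner X X) * (mInner Y Y)) := Real.sqrt_le_sqrt key
    _ = Real.sqrt (mInner X X) * Real.sqrt (mInner Y Y) := Real.sqrt_mul h1 _

lemma main_ineq (P Δ M : Matrix (Fin p) (Fin p) ℝ) (hPt : Pᵀ = P) (hPi : P * P = P)
    (hΔ : Δᵀ = Δ) :
    |mInner Δ (M - (1 - P) * M * (1 - P))| ≤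
      Real.sqrt (2 * P.trace) * opN Δ * frobN M := by
  set Q : Matrix (Fin p) (Fin p) ℝ := 1 - P with hQ
  have hQt : Qᵀ = Q := by rw [hQ, Matrix.transpose_sub, Matrix.transpose_one, hPt]
  have hPQ : P * Q = 0 := by rw [hQ, Matrix.mul_sub, Matrix.mul_one, hPi, sub_self]
  have hQQ : Q * Q = Q := by
    rw [hQ, Matrix.sub_mul, Matrix.one_mul, Matrix.mul_sub, Matrix.mul_one, hPi]
    abel
  set B : Matrix (Fin p) (Fin p) ℝ := Δ - Q * Δ * Q with hB
  -- move the projection to the Δ side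
  have swap : ∀ X Y : Matrix (Fin p) (Fin p) ℝ,
      ((Q * X * Q)ᵀ * Y).trace = (Xᵀ * (Q * Y * Q)).trace := by
    intro X Y
    rw [Matrix.transpose_mul, Matrix.transpose_mul, hQt]
    calc (Q * (Xᵀ * Q) * Y).trace = (Q * ((Xᵀ * Q) * Y)).trace := by rw [Matrix.mul_assoc]
      _ = (((Xᵀ * Q) * Y) * Q).trace := Matrix.trace_mul_comm _ _
      _ = (Xᵀ * (Q * Y * Q)).trace := by simp only [Matrix.mul_assoc]
  have step1 : mInner Δ (M - Q * M * Q) = mInner B M := by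
    simp only [mInner, hB, Matrix.mul_sub, Matrix.sub_mul, Matrix.trace_sub,
      Matrix.transpose_sub]
    rw [swap Δ M]
  set X : Matrix (Fin p) (Fin p) ℝ := P * Δ with hX
  set Y : Matrix (Fin p) (Fin p) ℝ := Q * (Δ * P) with hY
  have hBXY : B = X + Y := by
    rw [hB, hX, hY, hQ]; noncomm_ring
  have hcross : mInner X Y = 0 := by
    rw [mInner, hX, hY, Matrix.transpose_mul, hPt, hΔ]
    have : Δ * P * (Q * (Δ * P)) = Δ * (P * Q) * (Δ * P) := by
      simp only [Matrix.mul_assoc]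
    rw [this, hPQ, Matrix.mul_zero, Matrix.zero_mul, Matrix.trace_zero]
  have hBB : mInner B B = mInner X X + mInner Y Y := by
    have expand : mInner B B = mInner X X + mInner X Y + mInner Y X + mInner Y Y := by
      simp only [hBXY, mInner, Matrix.transpose_add, Matrix.add_mul, Matrix.mul_add,
        Matrix.trace_add]
      ring
    rw [expand, hcross, mInner_comm Y X, hcross]
    ring
  have hPP : mInner P P = P.trace := by rw [mInner, hPt, hPi]
  have hXX : mInner X X ≤ (opN Δ)^2 * P.trace := by
    have : Xᵀ = Δ * P := by rw [hX, Matrix.transpose_mul, hPt, hΔ]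
    calc mInner X X = mInner Xᵀ Xᵀ := (mInner_transpose X).symm
      _ = mInner (Δ * P) (Δ * P) := by rw [this]
      _ ≤ (opN Δ)^2 * mInner P P := mInner_mul_le Δ P
      _ = (opN Δ)^2 * P.trace := by rw [hPP]
  have hYY : mInner Y Y ≤ (opN Δ)^2 * P.trace := by
    set Z : Matrix (Fin p) (Fin p) ℝ := Δ * P with hZ
    have hYZ : mInner Y Y = (Zᵀ * (Q * Z)).trace := by
      rw [mInner, hY, Matrix.transpose_mul, hQt]
      have : Zᵀ * Q * (Q * Z) = Zᵀ * (Q * Q) * Z := by simp only [Matrix.mul_assoc]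
      rw [Matrix.mul_assoc Zᵀ Q (Q*Z)]
      rw [show Q * (Q * Z) = (Q * Q) * Z from (Matrix.mul_assoc Q Q Z).symm, hQQ]
    have hposP : 0 ≤ (Zᵀ * (P * Z)).trace := by
      have : (P * Z)ᵀ * (P * Z) = Zᵀ * (P * Z) := by
        rw [Matrix.transpose_mul, hPt, Matrix.mul_assoc, ← Matrix.mul_assoc P P Z, hPi]
      have h := mInner_self_nonneg (P * Z)
      rw [mInner, this] at h
      exact h
    have hsplit : (Zᵀ * (Q * Z)).trace = (Zᵀ * Z).trace - (Zᵀ * (P * Z)).trace := by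
      rw [hQ, Matrix.sub_mul, Matrix.one_mul, Matrix.mul_sub, Matrix.trace_sub]
    calc mInner Y Y = (Zᵀ * Z).trace - (Zᵀ * (P * Z)).trace := by rw [hYZ, hsplit]
      _ ≤ (Zᵀ * Z).trace := by linarith
      _ = mInner Z Z := rfl
      _ ≤ (opN Δ)^2 * mInner P P := mInner_mul_le Δ P
      _ = (opN Δ)^2 * P.trace := by rw [hPP]
  have htrP : 0 ≤ P.trace := by rw [← hPP]; exact mInner_self_nonneg P
  have hBB2 : mInner B B ≤ 2 * P.trace * (opN Δ)^2 := by
    rw [hBB]; nlinarith [hXX, hYY]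
  have hsB : Real.sqrt (mInner B B) ≤ Real.sqrt (2 * P.trace) * opN Δ := by
    calc Real.sqrt (mInner B B) ≤ Real.sqrt (2 * P.trace * (opN Δ)^2) :=
          Real.sqrt_le_sqrt hBB2
      _ = Real.sqrt (2 * P.trace) * Real.sqrt ((opN Δ)^2) :=
          Real.sqrt_mul (by linarith) _
      _ = Real.sqrt (2 * P.trace) * opN Δ := by
          have h0 : (0:ℝ) ≤ opN Δ := norm_nonneg _
          rw [Real.sqrt_sq h0]
  have hfM : frobN M = Real.sqrt (mInner M M) := rfl
  calc |mInner Δ (M - Q * M * Q)| = |mInner B M| := by rw [step1]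
    _ ≤ Real.sqrt (mInner B B) * Real.sqrt (mInner M M) := abs_mInner_le B M
    _ ≤ Real.sqrt (2 * P.trace) * opN Δ * Real.sqrt (mInner M M) := by
        apply mul_le_mul_of_nonneg_right hsB (Real.sqrt_nonneg _)
    _ = Real.sqrt (2 * P.trace) * opN Δ * frobN M := by rw [hfM]

end Aux

theorem stmt8 {p r : ℕ} (S : Matrix (Fin p) (Fin p) ℝ) (hS : S.IsSymm)
    (hrank : S.rank = r)
    (Δ M : Matrix (Fin p) (Fin p) ℝ) (hΔ : Δ.IsSymm) (hM : M.IsSymm) :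
    let P := projMatrix (suppOf S)
    let Pperp := (1 : Matrix (Fin p) (Fin p) ℝ) - P
    |mInner Δ (M - Pperp * M * Pperp)| ≤ Real.sqrt (2 * r) * opN Δ * frobN M := by
  intro P Pperp
  set L : Submodule ℝ (EuclideanSpace ℝ (Fin p)) := suppOf S with hL
  set T : EuclideanSpace ℝ (Fin p) →ₗ[ℝ] EuclideanSpace ℝ (Fin p) :=
    L.subtype ∘ₗ (Submodule.orthogonalProjection L).toLinearMap with hT
  have hTP : Matrix.toEuclideanLin P = T := by
    simp [P, projMatrix, hT]; rfl
  -- P is symmetric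
  have hPherm : P.IsHermitian := by
    rw [Matrix.isHermitian_iff_isSymmetric, hTP]
    exact Submodule.starProjection_isSymmetric L
  have hPt : Pᵀ = P := by
    have := hPherm
    rwa [Matrix.IsHermitian, Matrix.conjTranspose_eq_transpose_of_trivial] at this
  -- P is idempotent
  have hTT : T ∘ₗ T = T := by
    ext x
    simp [hT, Submodule.orthogonalProjection_mem_subspace_eq_self,
      Submodule.starProjection_eq_self_iff.mpr (Submodule.starProjection_apply_mem L x)]
  have hPi : P * P = P := by
    apply Matrix.toEuclideanLin.injective
    rw [Matrix.toEuclideanLin_eq_toLin, Matrix.toLin_mul _ (PiLp.basisFun 2 ℝ (Fin p)) _,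
      ← Matrix.toEuclideanLin_eq_toLin, hTP, hTT]
  -- trace of P is r
  have hfr : Module.finrank ℝ L = r := by
    have : S.rank = Module.finrank ℝ (LinearMap.range
        (Matrix.toLin (PiLp.basisFun 2 ℝ (Fin p)) (PiLp.basisFun 2 ℝ (Fin p)) S)) :=
      Matrix.rank_eq_finrank_range_toLin S _ _
    rw [hrank] at this
    rw [hL, suppOf, Matrix.toEuclideanLin_eq_toLin]
    exact this.symm
  have htr : P.trace = (r : ℝ) := by
    have h1 : LinearMap.trace ℝ _ T = Matrix.trace
        (LinearMap.toMatrix (PiLp.basisFun 2 ℝ (Fin p)) (PiLp.basisFun 2 ℝ (Fin p)) T) :=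
      LinearMap.trace_eq_matrix_trace ℝ _ T
    have h2 : LinearMap.toMatrix (PiLp.basisFun 2 ℝ (Fin p)) (PiLp.basisFun 2 ℝ (Fin p)) T
        = P := by
      rw [← hTP, Matrix.toEuclideanLin_eq_toLin]
      exact LinearMap.toMatrix_toLin _ _ _
    have h3 : (Submodule.orthogonalProjection L).toLinearMap ∘ₗ L.subtype = LinearMap.id := by
      ext x
      simp [Submodule.orthogonalProjection_mem_subspace_eq_self]
    have h4 : LinearMap.trace ℝ _ T = (Module.finrank ℝ L : ℝ) := by
      rw [hT, LinearMap.trace_comp_comm', h3, LinearMap.trace_id]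
    rw [← h2, ← h1, h4, hfr]
  have := main_ineq P Δ M hPt hPi hΔ
  rw [htr] at this
  exact this
end

section
/- Let A be a p×p symmetric positive semidefinite matrix with spectral decomposition A = Σ_j σ_j u_j ⊗ u_j (σ_j ≥ 0, {u_j} orthonormal), and let λ > 0. Then the unique minimizer over the set 𝒮_p of p×p symmetric PSD matrices of F(S) = ‖A − S‖₂² + λ‖S‖₁ is Ŝ = Σ_j (σ_j − λ/2)₊ u_j ⊗ u_j, where x₊ = max(x,0) and ‖S‖₁ is the nuclear norm (= tr(S) for PSD S). -/
open Matrix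

/-- Squared Frobenius norm. -/
def frobSq {p : ℕ} (M : Matrix (Fin p) (Fin p) ℝ) : ℝ := (Mᵀ * M).trace

/-- Nuclear norm (sum of singular values) of a real square matrix: trace of √(AᵀA). -/
noncomputable def nucN {p : ℕ} (A : Matrix (Fin p) (Fin p) ℝ) : ℝ :=
  ((Matrix.posSemidef_conjTranspose_mul_self A).1.eigenvectorUnitary.1 *
    diagonal ((RCLike.ofReal : ℝ → ℝ) ∘ (√·) ∘ (Matrix.posSemidef_conjTranspose_mul_self A).1.eigenvalues) *
    (star (Matrix.posSemidef_conjTranspose_mul_self A).1.eigenvectorUnitary :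
      Matrix (Fin p) (Fin p) ℝ)).trace

namespace Stmt13Aux
variable {p : ℕ}

/-- Frobenius inner product. -/
def ip (M N : Matrix (Fin p) (Fin p) ℝ) : ℝ := ∑ i, ∑ j, M i j * N i j

/-- Quadratic form. -/
def q (x : Fin p → ℝ) (S : Matrix (Fin p) (Fin p) ℝ) : ℝ := ∑ i, ∑ l, x i * (S i l * x l)

lemma frobSq_eq_ip (M : Matrix (Fin p) (Fin p) ℝ) : frobSq M = ip M M := by
  simp only [frobSq, ip, Matrix.trace, Matrix.mul_apply, Matrix.diag, Matrix.transpose_apply]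
  exact Finset.sum_comm

lemma ip_symm (M N : Matrix (Fin p) (Fin p) ℝ) : ip M N = ip N M := by
  simp only [ip]
  exact Finset.sum_congr rfl fun i _ => Finset.sum_congr rfl fun j _ => mul_comm _ _

lemma ip_sub_sub (X Y : Matrix (Fin p) (Fin p) ℝ) :
    ip (X - Y) (X - Y) = ip X X - 2 * ip X Y + ip Y Y := by
  have h : ∀ i j : Fin p, (X - Y) i j * (X - Y) i j
      = X i j * X i j - 2 * (X i j * Y i j) + Y i j * Y i j := by
    intro i j; simp only [Matrix.sub_apply]; ring
  simp only [ip, h, Finset.sum_add_distrib, Finset.sum_sub_distrib, ← Finset.mul_sum]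

lemma frobSq_nonneg (M : Matrix (Fin p) (Fin p) ℝ) : 0 ≤ frobSq M := by
  rw [frobSq_eq_ip]
  exact Finset.sum_nonneg fun i _ => Finset.sum_nonneg fun j _ => mul_self_nonneg _

lemma eq_of_frobSq_eq_zero {M : Matrix (Fin p) (Fin p) ℝ} (h : frobSq M = 0) : M = 0 := by
  rw [frobSq_eq_ip] at h
  ext i j
  have h1 := (Finset.sum_eq_zero_iff_of_nonneg
    (fun i _ => Finset.sum_nonneg fun j _ => mul_self_nonneg (M i j))).mp h i (Finset.mem_univ i)
  have h2 := (Finset.sum_eq_zero_iff_of_nonneg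
    (fun j _ => mul_self_nonneg (M i j))).mp h1 j (Finset.mem_univ j)
  simpa [mul_self_eq_zero] using h2

lemma q_nonneg {S : Matrix (Fin p) (Fin p) ℝ} (hS : S.PosSemidef) (x : Fin p → ℝ) :
    0 ≤ q x S := by
  have := hS.dotProduct_mulVec_nonneg x
  simpa [q, dotProduct, Matrix.mulVec, Finset.mul_sum] using this

lemma nucN_psd {S : Matrix (Fin p) (Fin p) ℝ} (hS : S.PosSemidef) : nucN S = S.trace := by
  open scoped MatrixOrder in
  have hH := (Matrix.posSemidef_conjTranspose_mul_self S).1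
  open scoped MatrixOrder in
  have e : nucN S = (cfc Real.sqrt (Sᴴ * S)).trace := by
    rw [hH.cfc_eq]; rfl
  have h0 : (S * S).PosSemidef := by
    have := Matrix.posSemidef_conjTranspose_mul_self S; rwa [hS.1.eq] at this
  open scoped MatrixOrder in
  rw [e, hS.1.eq, ← cfcₙ_eq_cfc (f := Real.sqrt) (a := S * S),
    ← CFC.sqrt_eq_real_sqrt _ h0.nonneg,
    CFC.sqrt_mul_self S hS.nonneg]

lemma ipM_S (u : Fin p → Fin p → ℝ) (a : Fin p → ℝ) (S : Matrix (Fin p) (Fin p) ℝ) :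
    ip (∑ j, a j • Matrix.vecMulVec (u j) (u j)) S = ∑ j, a j * q (u j) S := by
  simp only [ip, q, Matrix.sum_apply, Matrix.smul_apply, Matrix.vecMulVec_apply,
    smul_eq_mul, Finset.sum_mul, Finset.mul_sum]
  refine (Finset.sum_congr rfl fun i _ => Finset.sum_comm).trans ?_
  rw [Finset.sum_comm]
  refine Finset.sum_congr rfl fun j _ => Finset.sum_congr rfl fun i _ =>
    Finset.sum_congr rfl fun l _ => by ring

lemma q_sum (u : Fin p → Fin p → ℝ) (a : Fin p → ℝ) (x : Fin p → ℝ) :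
    q x (∑ j, a j • Matrix.vecMulVec (u j) (u j))
      = ∑ j, a j * ((∑ i, x i * u j i) * (∑ l, u j l * x l)) := by
  simp only [q, Matrix.sum_apply, Matrix.smul_apply, Matrix.vecMulVec_apply, smul_eq_mul,
    Finset.sum_mul, Finset.mul_sum]
  refine (Finset.sum_congr rfl fun i _ => Finset.sum_comm).trans ?_
  rw [Finset.sum_comm]
  refine Finset.sum_congr rfl fun j _ => Finset.sum_congr rfl fun i _ =>
    Finset.sum_congr rfl fun l _ => by ring

section withU
variable {u : Fin p → Fin p → ℝ}
  (hu : ∀ i j, ∑ k, u i k * u j k = if i = j then (1 : ℝ) else 0)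
include hu

lemma hu' : ∀ i l, ∑ j, u j i * u j l = if i = l then (1:ℝ) else 0 := by
  have h1 : (Matrix.of u) * (Matrix.of u)ᵀ = 1 := by
    ext i j
    simpa [Matrix.mul_apply, Matrix.one_apply] using hu i j
  have h2 := mul_eq_one_comm.mp h1
  intro i l
  have := congrFun (congrFun h2 i) l
  simpa [Matrix.mul_apply, Matrix.one_apply] using this

lemma q_M (a : Fin p → ℝ) (j : Fin p) :
    q (u j) (∑ k, a k • Matrix.vecMulVec (u k) (u k)) = a j := by
  rw [q_sum]
  have h : ∀ k : Fin p, a k * ((∑ i, u j i * u k i) * (∑ l, u k l * u j l))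
      = if k = j then a j else 0 := by
    intro k
    rw [hu j k, hu k j]
    rcases eq_or_ne k j with h | h
    · simp [h]
    · simp [h, Ne.symm h]
  simp [h]

lemma trace_M (a : Fin p → ℝ) :
    (∑ j, a j • Matrix.vecMulVec (u j) (u j)).trace = ∑ j, a j := by
  simp only [Matrix.trace, Matrix.diag, Matrix.sum_apply, Matrix.smul_apply,
    Matrix.vecMulVec_apply, smul_eq_mul]
  rw [Finset.sum_comm]
  refine Finset.sum_congr rfl fun j _ => ?_
  rw [← Finset.mul_sum, hu j j]
  simp

lemma trace_eq_sum_q (S : Matrix (Fin p) (Fin p) ℝ) :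
    S.trace = ∑ j, q (u j) S := by
  simp only [q]
  rw [Finset.sum_comm]
  have h : ∀ i : Fin p, ∑ j, ∑ l, u j i * (S i l * u j l)
      = ∑ l, (if i = l then (1:ℝ) else 0) * S i l := by
    intro i
    rw [Finset.sum_comm]
    refine Finset.sum_congr rfl fun l _ => ?_
    rw [← hu' hu i l, Finset.sum_mul]
    exact Finset.sum_congr rfl fun j _ => by ring
  simp [h, Matrix.trace, Matrix.diag]

end withU
end Stmt13Aux

open Stmt13Aux in
theorem stmt13 {p : ℕ} (A : Matrix (Fin p) (Fin p) ℝ)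
    (σ : Fin p → ℝ) (hσ : ∀ j, 0 ≤ σ j)
    (u : Fin p → Fin p → ℝ)
    (hu : ∀ i j, ∑ k, u i k * u j k = if i = j then (1 : ℝ) else 0)
    (hA : A = ∑ j, σ j • Matrix.vecMulVec (u j) (u j))
    (lam : ℝ) (hlam : 0 < lam) :
    let Shat : Matrix (Fin p) (Fin p) ℝ :=
      ∑ j, max (σ j - lam / 2) 0 • Matrix.vecMulVec (u j) (u j)
    Shat.PosSemidef ∧
    (∀ S : Matrix (Fin p) (Fin p) ℝ, S.PosSemidef →
      frobSq (A - Shat) + lam * nucN Shat ≤ frobSq (A - S) + lam * nucN S) ∧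
    (∀ S : Matrix (Fin p) (Fin p) ℝ, S.PosSemidef →
      frobSq (A - S) + lam * nucN S = frobSq (A - Shat) + lam * nucN Shat → S = Shat) := by
  intro Shat
  have hShat : Shat = ∑ j, max (σ j - lam / 2) 0 • Matrix.vecMulVec (u j) (u j) := rfl
  set cf : Fin p → ℝ := fun j => max (σ j - lam / 2) 0 with hcf
  set df : Fin p → ℝ := fun j => max (lam / 2 - σ j) 0 with hdf
  -- Shat is PSD
  have hpsd : Shat.PosSemidef := by
    rw [hShat]
    refine Matrix.PosSemidef.of_dotProduct_mulVec_nonneg ?_ ?_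
    · show _ᴴ = _
      ext i l
      simp only [Matrix.conjTranspose_apply, Matrix.sum_apply, Matrix.smul_apply,
        Matrix.vecMulVec_apply, smul_eq_mul, star_trivial]
      exact Finset.sum_congr rfl fun j _ => by ring
    · intro x
      have hx : star x ⬝ᵥ ((∑ j, cf j • Matrix.vecMulVec (u j) (u j)) *ᵥ x)
          = q x (∑ j, cf j • Matrix.vecMulVec (u j) (u j)) := by
        simp [q, dotProduct, Matrix.mulVec, Finset.mul_sum]
      rw [hx, q_sum]
      refine Finset.sum_nonneg fun j _ => mul_nonneg (le_max_right _ _) ?_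
      have h : (∑ l, u j l * x l) = (∑ i, x i * u j i) :=
        Finset.sum_congr rfl fun l _ => mul_comm _ _
      rw [h]; exact mul_self_nonneg _
  -- the key identity
  have key : ∀ S : Matrix (Fin p) (Fin p) ℝ, S.PosSemidef →
      frobSq (A - S) + lam * nucN S
        = (frobSq (A - Shat) + lam * nucN Shat) + frobSq (S - Shat)
          + 2 * ∑ j, df j * q (u j) S := by
    intro S hS
    have h1 : frobSq (A - S) = (∑ j, σ j * σ j) - 2 * ∑ j, σ j * q (u j) S + ip S S := by
      rw [frobSq_eq_ip, ip_sub_sub]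
      congr 2
      · rw [hA, ipM_S]
        exact Finset.sum_congr rfl fun j _ => by rw [← hA, hA, q_M hu]
      · rw [hA, ipM_S]
    have h2 : nucN S = ∑ j, q (u j) S := by rw [nucN_psd hS, trace_eq_sum_q hu]
    have h3 : A - Shat = ∑ j, (σ j - cf j) • Matrix.vecMulVec (u j) (u j) := by
      rw [hA, hShat, ← Finset.sum_sub_distrib]
      exact Finset.sum_congr rfl fun j _ => (sub_smul _ _ _).symm
    have h4 : frobSq (A - Shat) = ∑ j, (σ j - cf j) * (σ j - cf j) := by
      rw [h3, frobSq_eq_ip, ipM_S]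
      exact Finset.sum_congr rfl fun j _ => by rw [q_M hu]
    have h5 : nucN Shat = ∑ j, cf j := by rw [nucN_psd hpsd, hShat, trace_M hu]
    have h6 : frobSq (S - Shat) = ip S S - 2 * ∑ j, cf j * q (u j) S + ∑ j, cf j * cf j := by
      rw [frobSq_eq_ip, ip_sub_sub]
      congr 2
      · rw [ip_symm, hShat, ipM_S]
      · rw [hShat, frobSq_eq_ip] at *
        rw [ipM_S]
        exact Finset.sum_congr rfl fun j _ => by rw [q_M hu]
    rw [h1, h2, h4, h5, h6]
    have hterm : ∀ j : Fin p,
        σ j * σ j - 2 * (σ j * q (u j) S) + lam * q (u j) S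
          = ((σ j - cf j) * (σ j - cf j) + lam * cf j)
            + (cf j * cf j - 2 * (cf j * q (u j) S)) + 2 * (df j * q (u j) S) := by
      intro j
      rcases le_total (σ j) (lam / 2) with h | h
      · have hcj : cf j = 0 := max_eq_right (by linarith)
        have hdj : df j = lam / 2 - σ j := max_eq_left (by linarith)
        rw [hcj, hdj]; ring
      · have hcj : cf j = σ j - lam / 2 := max_eq_left (by linarith)
        have hdj : df j = 0 := max_eq_right (by linarith)
        rw [hcj, hdj]; ring
    have hsum := Finset.sum_congr rfl fun j (_ : j ∈ Finset.univ) => hterm j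
    simp only [Finset.sum_add_distrib, Finset.sum_sub_distrib, ← Finset.mul_sum] at hsum
    linarith [hsum]
  refine ⟨hpsd, fun S hS => ?_, fun S hS heq => ?_⟩
  · rw [key S hS]
    have h1 := frobSq_nonneg (S - Shat)
    have h2 : 0 ≤ ∑ j, df j * q (u j) S :=
      Finset.sum_nonneg fun j _ => mul_nonneg (le_max_right _ _) (q_nonneg hS (u j))
    linarith
  · rw [key S hS] at heq
    have h1 := frobSq_nonneg (S - Shat)
    have h2 : 0 ≤ ∑ j, df j * q (u j) S :=
      Finset.sum_nonneg fun j _ => mul_nonneg (le_max_right _ _) (q_nonneg hS (u j))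
    have h3 : frobSq (S - Shat) = 0 := by linarith
    have h4 := eq_of_frobSq_eq_zero h3
    rw [sub_eq_zero] at h4
    exact h4
end

section
/- Let Σ̃ and Σ be p×p symmetric PSD matrices and λ > 0 with λ ≥ 2‖Σ̃ − Σ‖_∞. Let Σ̂ = argmin_{S ∈ 𝒮_p} ‖Σ̃ − S‖₂² + λ‖S‖₁. Then for every S ∈ 𝒮_p, ‖Σ̂ − Σ‖₂² ≤ ‖S − Σ‖₂² + 2λ‖S‖₁. -/
open Matrix

open scoped MatrixOrder

lemma nucN_psd {p : ℕ} {A : Matrix (Fin p) (Fin p) ℝ} (hA : A.PosSemidef) :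
    nucN A = A.trace := by
  have h : A ^ 2 = Aᴴ * A := by rw [pow_two, hA.isHermitian.eq]
  have e : nucN A = (CFC.sqrt (Aᴴ * A)).trace := by
    rw [CFC.sqrt_eq_real_sqrt _ (posSemidef_conjTranspose_mul_self A).nonneg, cfcₙ_eq_cfc,
      (posSemidef_conjTranspose_mul_self A).1.cfc_eq]
    rfl
  rw [e, hA.isHermitian.eq, CFC.sqrt_mul_self A hA.nonneg]

lemma quadform_le {p : ℕ} (A : Matrix (Fin p) (Fin p) ℝ) (x : Fin p → ℝ) :
    x ⬝ᵥ (A *ᵥ x) ≤ opN A * (x ⬝ᵥ x) := by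
  set y : EuclideanSpace ℝ (Fin p) := (WithLp.equiv 2 _).symm x with hy
  have h1 : x ⬝ᵥ (A *ᵥ x) = inner ℝ y ((Matrix.toEuclideanCLM (𝕜 := ℝ) A) y) := by
    rw [hy, WithLp.equiv_symm_apply, Matrix.toEuclideanCLM_toLp]
    simp [PiLp.inner_apply, dotProduct, mul_comm]
  have h2 : inner ℝ y ((Matrix.toEuclideanCLM (𝕜 := ℝ) A) y) ≤
      ‖Matrix.toEuclideanCLM (𝕜 := ℝ) A‖ * ‖y‖ * ‖y‖ := by
    calc inner ℝ y ((Matrix.toEuclideanCLM (𝕜 := ℝ) A) y)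
        ≤ ‖y‖ * ‖(Matrix.toEuclideanCLM (𝕜 := ℝ) A) y‖ := real_inner_le_norm _ _
      _ ≤ ‖y‖ * (‖Matrix.toEuclideanCLM (𝕜 := ℝ) A‖ * ‖y‖) := by
          apply mul_le_mul_of_nonneg_left (ContinuousLinearMap.le_opNorm _ _) (norm_nonneg _)
      _ = ‖Matrix.toEuclideanCLM (𝕜 := ℝ) A‖ * ‖y‖ * ‖y‖ := by ring
  have h3 : ‖y‖ * ‖y‖ = x ⬝ᵥ x := by
    rw [← real_inner_self_eq_norm_mul_norm]
    rw [hy, WithLp.equiv_symm_apply, PiLp.inner_apply]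
    simp [PiLp.inner_apply, hy, dotProduct, pow_two]
  rw [h1, opN, ← h3]
  linarith [h2]

lemma trace_mul_le {p : ℕ} (A B : Matrix (Fin p) (Fin p) ℝ) (hB : B.PosSemidef) :
    (A * B).trace ≤ opN A * B.trace := by
  set C := CFC.sqrt B with hC
  have hCsym : Cᵀ = C := (CFC.sqrt_nonneg B).posSemidef.isHermitian.eq
  have hCC : C * C = B := CFC.sqrt_mul_sqrt_self B hB.nonneg
  have h1 : (A * B).trace = (C * (A * C)).trace := by
    rw [← hCC, ← mul_assoc, Matrix.trace_mul_comm]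
  have h2 : (C * (A * C)).trace = ∑ i, (C i) ⬝ᵥ (A *ᵥ (C i)) := by
    rw [Matrix.trace]
    congr 1; ext i
    simp only [Matrix.diag_apply, Matrix.mul_apply, dotProduct, Matrix.mulVec,
      dotProduct]
    congr 1; ext j
    congr 1
    congr 1; ext k
    congr 1
    calc C k i = Cᵀ i k := rfl
    _ = C i k := by rw [hCsym]
  have h3 : B.trace = ∑ i, (C i) ⬝ᵥ (C i) := by
    rw [← hCC, Matrix.trace]
    congr 1; ext i
    simp only [Matrix.diag_apply, Matrix.mul_apply, dotProduct]
    congr 1; ext k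
    congr 1
    calc C k i = Cᵀ i k := rfl
    _ = C i k := by rw [hCsym]
  rw [h1, h2, h3, Finset.mul_sum]
  exact Finset.sum_le_sum fun i _ => quadform_le A (C i)

lemma opN_neg {p : ℕ} (A : Matrix (Fin p) (Fin p) ℝ) : opN (-A) = opN A := by
  rw [opN, opN, map_neg, norm_neg]

lemma trace_mul_ge {p : ℕ} (A B : Matrix (Fin p) (Fin p) ℝ) (hB : B.PosSemidef) :
    -(opN A * B.trace) ≤ (A * B).trace := by
  have := trace_mul_le (-A) B hB
  rw [opN_neg, Matrix.neg_mul, Matrix.trace_neg] at this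
  linarith

lemma trace_comm' {p : ℕ} (X Y : Matrix (Fin p) (Fin p) ℝ) :
    (Yᵀ * X).trace = (Xᵀ * Y).trace := by
  rw [← Matrix.trace_transpose (Yᵀ * X), Matrix.transpose_mul, Matrix.transpose_transpose]

lemma psd_trace_nonneg {p : ℕ} {B : Matrix (Fin p) (Fin p) ℝ} (hB : B.PosSemidef) :
    0 ≤ B.trace := by
  have hCC := CFC.sqrt_mul_sqrt_self B hB.nonneg
  have hCsym : (CFC.sqrt B)ᵀ = CFC.sqrt B := (CFC.sqrt_nonneg B).posSemidef.isHermitian.eq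
  rw [← hCC, Matrix.trace]
  apply Finset.sum_nonneg; intro i _
  rw [Matrix.diag_apply, Matrix.mul_apply]
  apply Finset.sum_nonneg; intro j _
  have h : CFC.sqrt B j i = CFC.sqrt B i j := by
    calc CFC.sqrt B j i = (CFC.sqrt B)ᵀ i j := rfl
    _ = CFC.sqrt B i j := by rw [hCsym]
  rw [h]; exact mul_self_nonneg _

lemma expand_frob {p : ℕ} (X Y : Matrix (Fin p) (Fin p) ℝ) :
    frobSq (X - Y) = (Xᵀ * X).trace - 2 * (Xᵀ * Y).trace + (Yᵀ * Y).trace := by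
  simp only [frobSq, Matrix.transpose_sub, Matrix.sub_mul, Matrix.mul_sub, Matrix.trace_sub]
  rw [trace_comm' X Y]
  ring

theorem stmt15 {p : ℕ} (SigTilde Sig Sighat : Matrix (Fin p) (Fin p) ℝ)
    (hSigTilde : SigTilde.PosSemidef) (hSig : Sig.PosSemidef)
    (lam : ℝ) (hlam0 : 0 < lam) (hlam : 2 * opN (SigTilde - Sig) ≤ lam)
    (hhat : Sighat.PosSemidef)
    (hmin : ∀ S : Matrix (Fin p) (Fin p) ℝ, S.PosSemidef →
      frobSq (SigTilde - Sighat) + lam * nucN Sighat ≤ frobSq (SigTilde - S) + lam * nucN S) :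
    ∀ S : Matrix (Fin p) (Fin p) ℝ, S.PosSemidef →
      frobSq (Sighat - Sig) ≤ frobSq (S - Sig) + 2 * lam * nucN S := by
  intro S hS
  set A := SigTilde - Sig with hA
  have hAsym : Aᵀ = A := by
    have h1 : SigTildeᵀ = SigTilde := hSigTilde.isHermitian.eq
    have h2 : Sigᵀ = Sig := hSig.isHermitian.eq
    rw [hA, Matrix.transpose_sub, h1, h2]
  -- minimality with nuclear norms as traces
  have hm := hmin S hS
  rw [nucN_psd hhat, nucN_psd hS] at hm
  rw [nucN_psd hS]
  -- trace bounds
  have hopA : opN A ≤ lam / 2 := by linarith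
  have htrS : 0 ≤ S.trace := psd_trace_nonneg hS
  have htrH : 0 ≤ Sighat.trace := psd_trace_nonneg hhat
  have hop0 : 0 ≤ opN A := norm_nonneg _
  have hb1 : (A * Sighat).trace ≤ lam / 2 * Sighat.trace := by
    have := trace_mul_le A Sighat hhat
    nlinarith
  have hb2 : -(lam / 2 * S.trace) ≤ (A * S).trace := by
    have := trace_mul_ge A S hS
    nlinarith
  -- algebraic identity
  have hid : frobSq (Sighat - Sig) =
      frobSq (S - Sig) + (frobSq (SigTilde - Sighat) - frobSq (SigTilde - S))
        + 2 * (A * Sighat).trace - 2 * (A * S).trace := by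
    rw [← hAsym]
    simp only [expand_frob, hA, Matrix.transpose_sub, Matrix.sub_mul, Matrix.trace_sub]
    rw [trace_comm' Sighat Sig, trace_comm' S Sig]
    ring
  rw [hid]
  linarith
end
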